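/- Let u : ℝ^d → ℝ be four times continuously differentiable and let x ∈ ℝ^d and M ≥ 0 satisfy ‖D⁴u(z)‖ ≤ M for every z in the closed ball of radius δ centered at x. Then the nonlocal Laplacian satisfies the second-order pointwise consistency estimate |ℒ_δ u(x) − Δu(x)| ≤ (d·M/12)·δ², where Δu(x) denotes the classical Laplacian (the trace of the Hessian of u at x). -/

import Mathlib

open MeasureTheory Set

namespace NLhelper

variable {F : Type*} [NormedAddCommGroup F] [NormedSpace ℝ F]

theorem itfd_add_left {n : ℕ∞} {u : F → ℝ} (hu : ContDiff ℝ n u) (c : F)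
    {k : ℕ} (hk : (k : ℕ∞) ≤ n) (w : F) :
    iteratedFDeriv ℝ k (fun z => u (c + z)) w = iteratedFDeriv ℝ k u (c + w) := by
  have hp : HasFTaylorSeriesUpTo n u (ftaylorSeries ℝ u) := contDiff_iff_ftaylorSeries.mp hu
  have hq : HasFTaylorSeriesUpTo n (fun z => u (c + z))
      (fun w => ftaylorSeries ℝ u (c + w)) := by
    refine ⟨fun w => hp.zero_eq (c + w), fun m hm w => ?_, fun m hm =>
      (hp.cont m hm).comp (continuous_const.add continuous_id)⟩
    have h1 := hp.fderiv m hm (c + w)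
    have h2 : HasFDerivAt (fun z : F => c + z) (ContinuousLinearMap.id ℝ F) w := by
      simpa using (hasFDerivAt_id w).const_add c
    simpa [Function.comp_def] using h1.comp w h2
  have e1 := hq.eq_iteratedFDeriv (by exact_mod_cast hk) w
  have e2 := hp.eq_iteratedFDeriv (by exact_mod_cast hk) (c + w)
  rw [← e1, ← e2]

theorem itdw_eq {g : ℝ → ℝ} {n : ℕ∞} (hg : ContDiff ℝ n g) {k : ℕ}
    (hk : (k : ℕ∞) ≤ n) {s : Set ℝ} (hs : UniqueDiffOn ℝ s) {t : ℝ} (ht : t ∈ s) :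
    iteratedDerivWithin k g s t = iteratedDeriv k g t := by
  rw [iteratedDerivWithin_eq_iteratedFDerivWithin, iteratedDeriv_eq_iteratedFDeriv]
  have hp : HasFTaylorSeriesUpTo n g (ftaylorSeries ℝ g) := contDiff_iff_ftaylorSeries.mp hg
  rw [← (hp.hasFTaylorSeriesUpToOn s).eq_iteratedFDerivWithin_of_uniqueDiffOn
    (by exact_mod_cast hk) hs ht, hp.eq_iteratedFDeriv (by exact_mod_cast hk) t]

theorem line_deriv {u : F → ℝ} (hu : ContDiff ℝ 4 u) (x v : F)
    (k : ℕ) (hk : (k : ℕ∞) ≤ 4) (t : ℝ) :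
    iteratedDeriv k (fun s : ℝ => u (x + s • v)) t
      = iteratedFDeriv ℝ k u (x + t • v) (fun _ => v) := by
  have hu4 : ContDiff ℝ ((4 : ℕ∞) : WithTop ℕ∞) u := by exact_mod_cast hu
  have hL : (fun s : ℝ => u (x + s • v))
      = (fun z => u (x + z)) ∘ (ContinuousLinearMap.toSpanSingleton ℝ v) := by
    funext s; simp [ContinuousLinearMap.toSpanSingleton_apply]
  have hux : ContDiff ℝ 4 (fun z : F => u (x + z)) :=
    hu.comp (contDiff_const.add contDiff_id)
  rw [hL, iteratedDeriv_eq_iteratedFDeriv,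
    ContinuousLinearMap.iteratedFDeriv_comp_right _ hux _ (by exact_mod_cast hk),
    ContinuousMultilinearMap.compContinuousLinearMap_apply,
    itfd_add_left (by exact_mod_cast hu : ContDiff ℝ (4:ℕ∞) u) x hk]
  simp [ContinuousLinearMap.toSpanSingleton_apply]

theorem taylor_side {u : F → ℝ} (hu : ContDiff ℝ 4 u) (x : F) {δ M : ℝ}
    (hδ : 0 < δ) (hDu : ∀ z ∈ Metric.closedBall x δ, ‖iteratedFDeriv ℝ 4 u z‖ ≤ M)
    (v : F) (hv : ‖v‖ ≤ δ) :
    |u (x + v) - ∑ k ∈ Finset.range 4, iteratedFDeriv ℝ k u x (fun _ => v) / (k : ℕ).factorial|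
      ≤ M * ‖v‖ ^ 4 / 24 := by
  set g : ℝ → ℝ := fun s => u (x + s • v) with hg_def
  have hg : ContDiff ℝ 4 g := hu.comp (contDiff_const.add (contDiff_id.smul contDiff_const))
  have hg' : ContDiff ℝ (4 : ℕ∞) g := by exact_mod_cast hg
  have hs : UniqueDiffOn ℝ (Icc (0:ℝ) 1) := uniqueDiffOn_Icc one_pos
  have hdiff3 : Differentiable ℝ (iteratedDeriv 3 g) :=
    hg.differentiable_iteratedDeriv 3 (by exact_mod_cast (by norm_num : (3:ℕ) < 4))
  have e1 : uIcc (0:ℝ) 1 = Icc 0 1 := uIcc_of_le zero_le_one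
  have e2 : uIoo (0:ℝ) 1 = Ioo 0 1 := uIoo_of_le zero_le_one
  have H := taylor_mean_remainder_lagrange (f := g) (x := 1) (x₀ := 0) (n := 3)
    one_pos.ne ((hg.of_le (by norm_num)).contDiffOn)
    (by rw [e1, e2]; exact (hdiff3.differentiableOn).congr fun y hy =>
      itdw_eq hg' (by norm_num) hs (Ioo_subset_Icc_self hy))
  rw [e1, e2] at H
  obtain ⟨ξ, hξ, hT⟩ := H
  have hline := line_deriv hu x v
  -- rewrite the Taylor polynomial
  have hpoly : taylorWithinEval g 3 (Icc (0:ℝ) 1) 0 1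
      = ∑ k ∈ Finset.range 4, iteratedFDeriv ℝ k u x (fun _ => v) / (k : ℕ).factorial := by
    rw [taylor_within_apply]
    refine Finset.sum_congr rfl fun k hk => ?_
    have hk4 : (k : ℕ∞) ≤ 4 := by
      have := Finset.mem_range.mp hk
      exact_mod_cast Nat.le_of_lt_succ (by omega)
    rw [itdw_eq hg' hk4 hs (by constructor <;> norm_num), hline k hk4 0]
    simp [smul_eq_mul]
    ring
  have hg1 : g 1 = u (x + v) := by simp [hg_def]
  have hDW : iteratedDerivWithin 4 g (Icc (0:ℝ) 1) ξ
      = iteratedFDeriv ℝ 4 u (x + ξ • v) (fun _ => v) := by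
    rw [itdw_eq hg' (by norm_num) hs (Ioo_subset_Icc_self hξ), hline 4 (by norm_num) ξ]
  have hmem : x + ξ • v ∈ Metric.closedBall x δ := by
    rw [Metric.mem_closedBall, dist_eq_norm]
    have : ‖x + ξ • v - x‖ = |ξ| * ‖v‖ := by
      rw [add_sub_cancel_left, norm_smul, Real.norm_eq_abs]
    rw [this]
    have hξ1 : |ξ| ≤ 1 := by
      rw [abs_le]; exact ⟨by linarith [hξ.1], le_of_lt hξ.2⟩
    calc |ξ| * ‖v‖ ≤ 1 * ‖v‖ := by
          exact mul_le_mul_of_nonneg_right hξ1 (norm_nonneg v)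
      _ ≤ δ := by simpa using hv
  have hbound : |iteratedFDeriv ℝ 4 u (x + ξ • v) (fun _ => v)| ≤ M * ‖v‖ ^ 4 := by
    calc |iteratedFDeriv ℝ 4 u (x + ξ • v) (fun _ => v)|
        ≤ ‖iteratedFDeriv ℝ 4 u (x + ξ • v)‖ * ∏ _i : Fin 4, ‖v‖ := by
          simpa [Real.norm_eq_abs] using
            (iteratedFDeriv ℝ 4 u (x + ξ • v)).le_opNorm (fun _ => v)
      _ ≤ M * ‖v‖ ^ 4 := by
          rw [Finset.prod_const]
          simp only [Finset.card_univ, Fintype.card_fin]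
          exact mul_le_mul_of_nonneg_right (hDu _ hmem) (by positivity)
  have h24 : ((3 + 1 : ℕ).factorial : ℝ) = 24 := by norm_num [Nat.factorial]
  rw [← hpoly, ← hg1]
  rw [hT, hDW]
  rw [abs_div, abs_mul]
  have : |((3 + 1 : ℕ).factorial : ℝ)| = 24 := by rw [h24]; norm_num
  rw [this]
  have h1 : |(1 - 0 : ℝ) ^ (3 + 1)| = 1 := by norm_num
  rw [h1, mul_one]
  linarith [hbound]

theorem taylor_sym {u : F → ℝ} (hu : ContDiff ℝ 4 u) (x : F) {δ M : ℝ}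
    (hδ : 0 < δ) (hDu : ∀ z ∈ Metric.closedBall x δ, ‖iteratedFDeriv ℝ 4 u z‖ ≤ M)
    (h : F) (hh : ‖h‖ ≤ δ) :
    |u (x + h) + u (x - h) - 2 * u x - iteratedFDeriv ℝ 2 u x (fun _ => h)|
      ≤ M / 12 * ‖h‖ ^ 4 := by
  have E1 := taylor_side hu x hδ hDu h hh
  have E2 := taylor_side hu x hδ hDu (-h) (by simpa using hh)
  have hneg : ∀ k : ℕ, iteratedFDeriv ℝ k u x (fun _ => -h)
      = (-1 : ℝ) ^ k * iteratedFDeriv ℝ k u x (fun _ => h) := by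
    intro k
    have := (iteratedFDeriv ℝ k u x).map_smul_univ (fun _ : Fin k => (-1 : ℝ)) (fun _ => h)
    simpa [smul_eq_mul] using this
  have hS : ∀ w : F, (∑ k ∈ Finset.range 4,
      iteratedFDeriv ℝ k u x (fun _ => w) / (k : ℕ).factorial)
      = u x + iteratedFDeriv ℝ 1 u x (fun _ => w)
        + iteratedFDeriv ℝ 2 u x (fun _ => w) / 2
        + iteratedFDeriv ℝ 3 u x (fun _ => w) / 6 := by
    intro w
    rw [show Finset.range 4 = Finset.range (3+1) from rfl, Finset.sum_range_succ,
      show Finset.range 3 = Finset.range (2+1) from rfl, Finset.sum_range_succ,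
      show Finset.range 2 = Finset.range (1+1) from rfl, Finset.sum_range_succ,
      Finset.sum_range_one]
    norm_num [Nat.factorial, iteratedFDeriv_zero_apply]
  rw [hS] at E1 E2
  rw [hneg 1, hneg 2, hneg 3] at E2
  have hxsub : x + -h = x - h := by abel
  rw [hxsub] at E2
  have hnn : ‖-h‖ = ‖h‖ := norm_neg h
  rw [hnn] at E2
  set A1 := iteratedFDeriv ℝ 1 u x (fun _ => h)
  set A2 := iteratedFDeriv ℝ 2 u x (fun _ => h)
  set A3 := iteratedFDeriv ℝ 3 u x (fun _ => h)
  have key : u (x + h) + u (x - h) - 2 * u x - A2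
      = (u (x + h) - (u x + A1 + A2 / 2 + A3 / 6))
        + (u (x - h) - (u x + (-1 : ℝ) ^ 1 * A1 + (-1 : ℝ) ^ 2 * A2 / 2
            + (-1 : ℝ) ^ 3 * A3 / 6)) := by ring
  rw [key]
  calc |_ + _| ≤ _ + _ := abs_add_le _ _
    _ ≤ M * ‖h‖ ^ 4 / 24 + M * ‖h‖ ^ 4 / 24 := add_le_add E1 E2
    _ = M / 12 * ‖h‖ ^ 4 := by ring

end NLhelper

open MeasureTheory in
/-- Second-order pointwise consistency of the nonlocal Laplacian with the
classical Laplacian (trace of the Hessian). -/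
theorem nonlocal_laplacian_pointwise_consistency
    (d : ℕ) (hd : 1 ≤ d) (δ : ℝ) (hδ : 0 < δ)
    (γ : ℝ → ℝ) (hγ_meas : Measurable γ) (hγ_nonneg : ∀ r, 0 ≤ γ r)
    (hγ_supp : ∀ r, δ ≤ r → γ r = 0)
    (hγ_int : Integrable (fun h : EuclideanSpace ℝ (Fin d) => γ ‖h‖))
    (hγ_norm : (∫ h : EuclideanSpace ℝ (Fin d), γ ‖h‖ * ‖h‖ ^ 2) = (d : ℝ))
    (u : EuclideanSpace ℝ (Fin d) → ℝ) (hu : ContDiff ℝ 4 u)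
    (x : EuclideanSpace ℝ (Fin d)) (M : ℝ) (hM : 0 ≤ M)
    (hDu : ∀ z ∈ Metric.closedBall x δ, ‖iteratedFDeriv ℝ 4 u z‖ ≤ M) :
    |(2 * ∫ y, (u y - u x) * γ ‖y - x‖) -
        ∑ i : Fin d, iteratedFDeriv ℝ 2 u x
          ![EuclideanSpace.single i 1, EuclideanSpace.single i 1]| ≤
      d * M / 12 * δ ^ 2 := by
  classical
  have hcons : ∀ a : EuclideanSpace ℝ (Fin d),
      (![a, a] : Fin 2 → EuclideanSpace ℝ (Fin d)) = fun _ => a := by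
    intro a; funext j; fin_cases j <;> rfl
  simp only [hcons]
  set B2 := iteratedFDeriv ℝ 2 u x with hB2
  have hγm : AEStronglyMeasurable (fun h : EuclideanSpace ℝ (Fin d) => γ ‖h‖) volume :=
    (hγ_meas.comp measurable_norm).aestronglyMeasurable
  have habs : ∀ (h : EuclideanSpace ℝ (Fin d)) (i : Fin d), |h i| ≤ ‖h‖ := by
    intro h i
    rw [EuclideanSpace.norm_eq, ← Real.sqrt_sq_eq_abs]
    apply Real.sqrt_le_sqrt
    exact Finset.single_le_sum (f := fun j => ‖h j‖^2) (fun j _ => by positivity)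
      (Finset.mem_univ i) |>.trans_eq' (by simp [Real.norm_eq_abs, sq_abs])
  -- dominated integrability helper
  have hdom : ∀ (G : EuclideanSpace ℝ (Fin d) → ℝ) (c : ℝ),
      AEStronglyMeasurable G volume → (∀ h, ‖h‖ ≤ δ → |G h| ≤ c) →
      Integrable (fun h => G h * γ ‖h‖) := by
    intro G c hGm hb
    refine (hγ_int.const_mul c).mono' (hGm.mul hγm) (ae_of_all _ fun h => ?_)
    rw [Real.norm_eq_abs, abs_mul, abs_of_nonneg (hγ_nonneg _)]
    by_cases hh : ‖h‖ ≤ δ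
    · exact mul_le_mul_of_nonneg_right (hb h hh) (hγ_nonneg _)
    · rw [hγ_supp _ (le_of_not_ge hh)]; simp
  obtain ⟨C, hC⟩ := (isCompact_closedBall x δ).exists_bound_of_continuousOn
    ((hu.continuous.sub continuous_const).continuousOn)
  have hmemp : ∀ h : EuclideanSpace ℝ (Fin d), ‖h‖ ≤ δ →
      x + h ∈ Metric.closedBall x δ := by
    intro h hh; rw [Metric.mem_closedBall, dist_eq_norm, add_sub_cancel_left]; exact hh
  have hmemm : ∀ h : EuclideanSpace ℝ (Fin d), ‖h‖ ≤ δ →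
      x - h ∈ Metric.closedBall x δ := by
    intro h hh
    rw [Metric.mem_closedBall, dist_eq_norm, show x - h - x = -h from by abel, norm_neg]
    exact hh
  have hIp : Integrable (fun h : EuclideanSpace ℝ (Fin d) => (u (x + h) - u x) * γ ‖h‖) :=
    hdom _ C (((hu.continuous.comp (continuous_const.add continuous_id)).sub
        continuous_const).aestronglyMeasurable)
      (fun h hh => by simpa [Real.norm_eq_abs] using hC _ (hmemp h hh))
  have hIm : Integrable (fun h : EuclideanSpace ℝ (Fin d) => (u (x - h) - u x) * γ ‖h‖) :=
    hdom _ C (((hu.continuous.comp (continuous_const.sub continuous_id)).sub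
        continuous_const).aestronglyMeasurable)
      (fun h hh => by simpa [Real.norm_eq_abs] using hC _ (hmemm h hh))
  have hIq : ∀ i j : Fin d,
      Integrable (fun h : EuclideanSpace ℝ (Fin d) => (h i * h j) * γ ‖h‖) := by
    intro i j
    refine hdom _ (δ * δ)
      (((EuclideanSpace.proj i).continuous.mul (EuclideanSpace.proj j).continuous).aestronglyMeasurable)
      (fun h hh => ?_)
    rw [abs_mul]
    exact mul_le_mul ((habs h i).trans hh) ((habs h j).trans hh) (abs_nonneg _) hδ.le
  have hIB : Integrable (fun h : EuclideanSpace ℝ (Fin d) => B2 (fun _ => h) * γ ‖h‖) := by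
    refine hdom _ (‖B2‖ * (δ * δ))
      ((B2.cont.comp (continuous_pi fun _ => continuous_id)).aestronglyMeasurable)
      (fun h hh => ?_)
    calc |B2 (fun _ => h)| ≤ ‖B2‖ * ∏ _i : Fin 2, ‖h‖ := by
          simpa [Real.norm_eq_abs] using B2.le_opNorm (fun _ => h)
      _ ≤ ‖B2‖ * (δ * δ) := by
          rw [Fin.prod_univ_two]
          exact mul_le_mul_of_nonneg_left
            (mul_le_mul hh hh (norm_nonneg _) hδ.le) (norm_nonneg _)
  have hIn : Integrable (fun h : EuclideanSpace ℝ (Fin d) => γ ‖h‖ * ‖h‖ ^ 2) := by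
    have h1 := hdom (fun h : EuclideanSpace ℝ (Fin d) => ‖h‖ ^ 2) (δ * δ)
      ((continuous_norm.pow 2).aestronglyMeasurable) (fun h hh => by
        show |‖h‖ ^ 2| ≤ δ * δ
        rw [abs_of_nonneg (by positivity), pow_two]
        exact mul_le_mul hh hh (norm_nonneg h) hδ.le)
    have heq : (fun h : EuclideanSpace ℝ (Fin d) => γ ‖h‖ * ‖h‖ ^ 2)
        = fun h => ‖h‖ ^ 2 * γ ‖h‖ := by funext h; ring
    rw [heq]; exact h1
  -- off-diagonal second moments vanish
  have hIzero : ∀ i j : Fin d, i ≠ j →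
      (∫ h : EuclideanSpace ℝ (Fin d), (h i * h j) * γ ‖h‖) = 0 := by
    intro i j hij
    set e := LinearIsometryEquiv.piLpCongrRight 2 (fun k : Fin d =>
      if k = j then (LinearIsometryEquiv.neg ℝ : ℝ ≃ₗᵢ[ℝ] ℝ)
      else LinearIsometryEquiv.refl ℝ ℝ) with he
    have hcomp := e.measurePreserving.integral_comp e.toHomeomorph.measurableEmbedding
      (fun h : EuclideanSpace ℝ (Fin d) => (h i * h j) * γ ‖h‖)
    have key : ∀ h : EuclideanSpace ℝ (Fin d),
        ((e h) i * (e h) j) * γ ‖e h‖ = -((h i * h j) * γ ‖h‖) := by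
      intro h
      have h1 : (e h) i = h i := by
        simp [he, LinearIsometryEquiv.piLpCongrRight_apply, hij]
      have h2 : (e h) j = -(h j) := by
        simp [he, LinearIsometryEquiv.piLpCongrRight_apply]
      rw [h1, h2, e.norm_map]; ring
    have hfinal : (∫ h : EuclideanSpace ℝ (Fin d), (h i * h j) * γ ‖h‖)
        = -(∫ h : EuclideanSpace ℝ (Fin d), (h i * h j) * γ ‖h‖) := by
      conv_lhs => rw [← hcomp]
      simp only [key]
      exact integral_neg _
    linarith
  -- diagonal second moments are all equal
  have hEqDiag : ∀ i j : Fin d, (∫ h : EuclideanSpace ℝ (Fin d), (h i * h i) * γ ‖h‖)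
      = ∫ h : EuclideanSpace ℝ (Fin d), (h j * h j) * γ ‖h‖ := by
    intro i j
    set e := LinearIsometryEquiv.piLpCongrLeft 2 ℝ ℝ (Equiv.swap i j) with he
    have hcomp := e.measurePreserving.integral_comp e.toHomeomorph.measurableEmbedding
      (fun h : EuclideanSpace ℝ (Fin d) => (h i * h i) * γ ‖h‖)
    have key : ∀ h : EuclideanSpace ℝ (Fin d),
        ((e h) i * (e h) i) * γ ‖e h‖ = (h j * h j) * γ ‖h‖ := by
      intro h
      have h1 : (e h) i = h j := by
        simp only [he, LinearIsometryEquiv.piLpCongrLeft_apply, Equiv.piCongrLeft'_apply,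
          Equiv.symm_swap]
        exact congrArg h (Equiv.swap_apply_left i j)
      rw [h1, e.norm_map]
    have : (∫ h : EuclideanSpace ℝ (Fin d), (h j * h j) * γ ‖h‖)
        = ∫ h : EuclideanSpace ℝ (Fin d), (h i * h i) * γ ‖h‖ := by
      rw [← hcomp]; simp only [key]
    exact this.symm
  have hnormsum : ∀ h : EuclideanSpace ℝ (Fin d), (∑ i, h i * h i) = ‖h‖ ^ 2 := by
    intro h
    rw [EuclideanSpace.norm_eq, Real.sq_sqrt (by positivity)]
    simp [Real.norm_eq_abs, sq_abs, sq]
  have hSum : (∑ i : Fin d, ∫ h : EuclideanSpace ℝ (Fin d), (h i * h i) * γ ‖h‖)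
      = (d : ℝ) := by
    rw [← integral_finset_sum _ (fun i _ => hIq i i)]
    rw [show (fun h : EuclideanSpace ℝ (Fin d) => ∑ i : Fin d, (h i * h i) * γ ‖h‖)
        = fun h : EuclideanSpace ℝ (Fin d) => γ ‖h‖ * ‖h‖ ^ 2 from
      funext fun h => by rw [← Finset.sum_mul, hnormsum h]; ring]
    exact hγ_norm
  have hdiag : ∀ i : Fin d, (∫ h : EuclideanSpace ℝ (Fin d), (h i * h i) * γ ‖h‖) = 1 := by
    intro i
    have h1 : (∑ j : Fin d, ∫ h : EuclideanSpace ℝ (Fin d), (h j * h j) * γ ‖h‖)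
        = (d : ℝ) * ∫ h : EuclideanSpace ℝ (Fin d), (h i * h i) * γ ‖h‖ := by
      rw [Finset.sum_congr rfl (fun j _ => hEqDiag j i), Finset.sum_const,
        Finset.card_univ, Fintype.card_fin, nsmul_eq_mul]
    have hd0 : (d : ℝ) ≠ 0 := Nat.cast_ne_zero.mpr (by omega)
    have h2 := hSum
    rw [h1] at h2
    have h3 : (d : ℝ) * (∫ h : EuclideanSpace ℝ (Fin d), (h i * h i) * γ ‖h‖)
        = (d : ℝ) * 1 := by rw [mul_one]; exact h2
    exact mul_left_cancel₀ hd0 h3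
  -- expansion of the Hessian term
  have hexp : ∀ h : EuclideanSpace ℝ (Fin d), B2 (fun _ => h)
      = ∑ r : Fin 2 → Fin d,
        (h (r 0) * h (r 1)) * B2 (fun k => EuclideanSpace.single (r k) (1:ℝ)) := by
    intro h
    have hb : h = ∑ j : Fin d, h j • EuclideanSpace.single j (1:ℝ) := by
      simpa [EuclideanSpace.basisFun_apply, EuclideanSpace.basisFun_repr] using
        ((EuclideanSpace.basisFun (Fin d) ℝ).sum_repr h).symm
    calc B2 (fun _ => h)
        = B2 (fun _ => ∑ j : Fin d, h j • EuclideanSpace.single j (1:ℝ)) := by rw [← hb]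
      _ = ∑ r : Fin 2 → Fin d, B2 (fun k => h (r k) • EuclideanSpace.single (r k) (1:ℝ)) :=
          B2.toMultilinearMap.map_sum (fun _ j => h j • EuclideanSpace.single j (1:ℝ))
      _ = _ := by
          refine Finset.sum_congr rfl fun r _ => ?_
          rw [B2.map_smul_univ]
          simp [Fin.prod_univ_two, smul_eq_mul]
  have hre : ∀ G : (Fin 2 → Fin d) → ℝ,
      (∑ r : Fin 2 → Fin d, G r) = ∑ i : Fin d, ∑ j : Fin d, G ![i, j] := by
    intro G
    rw [← (piFinTwoEquiv (fun _ => Fin d)).symm.sum_comp G, Fintype.sum_prod_type]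
    refine Finset.sum_congr rfl fun i _ => Finset.sum_congr rfl fun j _ => ?_
    congr 1
  have hBint : (∫ h : EuclideanSpace ℝ (Fin d), B2 (fun _ => h) * γ ‖h‖)
      = ∑ i : Fin d, B2 (fun _ => EuclideanSpace.single i (1:ℝ)) := by
    have step1 : (fun h : EuclideanSpace ℝ (Fin d) => B2 (fun _ => h) * γ ‖h‖)
        = fun h : EuclideanSpace ℝ (Fin d) => ∑ r : Fin 2 → Fin d,
          ((h (r 0) * h (r 1)) * γ ‖h‖) * B2 (fun k => EuclideanSpace.single (r k) (1:ℝ)) := by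
      funext h; rw [hexp h, Finset.sum_mul]
      exact Finset.sum_congr rfl fun r _ => by ring
    rw [step1, integral_finset_sum _ (fun r _ => (hIq (r 0) (r 1)).mul_const _)]
    rw [Finset.sum_congr rfl fun r _ =>
      integral_mul_const _ (fun h : EuclideanSpace ℝ (Fin d) => (h (r 0) * h (r 1)) * γ ‖h‖)]
    rw [hre (fun r => (∫ h : EuclideanSpace ℝ (Fin d), (h (r 0) * h (r 1)) * γ ‖h‖)
      * B2 (fun k => EuclideanSpace.single (r k) 1))]
    refine Finset.sum_congr rfl fun i _ => ?_
    rw [Finset.sum_eq_single i]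
    · simp only [Matrix.cons_val_zero, Matrix.cons_val_one, Matrix.head_cons]
      rw [hdiag i, one_mul]
      congr 1
      funext k; fin_cases k <;> rfl
    · intro j _ hji
      simp only [Matrix.cons_val_zero, Matrix.cons_val_one, Matrix.head_cons]
      rw [hIzero i j (Ne.symm hji), zero_mul]
    · intro hi; exact absurd (Finset.mem_univ i) hi
  -- change of variables and symmetrization
  have hJ : (∫ y, (u y - u x) * γ ‖y - x‖)
      = ∫ h : EuclideanSpace ℝ (Fin d), (u (x + h) - u x) * γ ‖h‖ := by
    rw [← integral_sub_right_eq_self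
      (fun h : EuclideanSpace ℝ (Fin d) => (u (x + h) - u x) * γ ‖h‖) x]
    simp only [show ∀ y : EuclideanSpace ℝ (Fin d), x + (y - x) = y from
      fun y => by abel]
  have hnegJ : (∫ h : EuclideanSpace ℝ (Fin d), (u (x - h) - u x) * γ ‖h‖)
      = ∫ h : EuclideanSpace ℝ (Fin d), (u (x + h) - u x) * γ ‖h‖ := by
    set e : EuclideanSpace ℝ (Fin d) ≃ₗᵢ[ℝ] EuclideanSpace ℝ (Fin d) :=
      LinearIsometryEquiv.neg ℝ with he
    have hcomp := e.measurePreserving.integral_comp e.toHomeomorph.measurableEmbedding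
      (fun h : EuclideanSpace ℝ (Fin d) => (u (x + h) - u x) * γ ‖h‖)
    have key : ∀ h : EuclideanSpace ℝ (Fin d),
        (u (x + e h) - u x) * γ ‖e h‖ = (u (x - h) - u x) * γ ‖h‖ := by
      intro h
      have h1 : e h = -h := rfl
      rw [h1, norm_neg, ← sub_eq_add_neg]
    rw [← hcomp]
    simp only [key]
  have h2J : 2 * (∫ y, (u y - u x) * γ ‖y - x‖)
      = ∫ h : EuclideanSpace ℝ (Fin d), (u (x + h) + u (x - h) - 2 * u x) * γ ‖h‖ := by
    rw [hJ, two_mul]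
    nth_rewrite 1 [← hnegJ]
    rw [← integral_add hIm hIp]
    exact integral_congr_ae (ae_of_all _ fun h => by ring)
  have hIF : Integrable (fun h : EuclideanSpace ℝ (Fin d) =>
      (u (x + h) + u (x - h) - 2 * u x) * γ ‖h‖) := by
    have heq : (fun h : EuclideanSpace ℝ (Fin d) => (u (x + h) + u (x - h) - 2 * u x) * γ ‖h‖)
        = fun h => (u (x + h) - u x) * γ ‖h‖ + (u (x - h) - u x) * γ ‖h‖ := by
      funext h; ring
    rw [heq]; exact hIp.add hIm
  -- pointwise Taylor estimate
  have hptw : ∀ h : EuclideanSpace ℝ (Fin d),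
      |(u (x + h) + u (x - h) - 2 * u x) * γ ‖h‖ - B2 (fun _ => h) * γ ‖h‖|
      ≤ (M / 12 * δ ^ 2) * (γ ‖h‖ * ‖h‖ ^ 2) := by
    intro h
    by_cases hh : ‖h‖ ≤ δ
    · have ht := NLhelper.taylor_sym hu x hδ hDu h hh
      have hfac : (u (x + h) + u (x - h) - 2 * u x) * γ ‖h‖ - B2 (fun _ => h) * γ ‖h‖
          = (u (x + h) + u (x - h) - 2 * u x - B2 (fun _ => h)) * γ ‖h‖ := by ring
      rw [hfac, abs_mul, abs_of_nonneg (hγ_nonneg _)]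
      have h2 : |u (x + h) + u (x - h) - 2 * u x - B2 (fun _ => h)| * γ ‖h‖
          ≤ (M / 12 * ‖h‖ ^ 4) * γ ‖h‖ := mul_le_mul_of_nonneg_right ht (hγ_nonneg _)
      refine h2.trans ?_
      have hM12 : (0:ℝ) ≤ M / 12 := by positivity
      calc (M / 12 * ‖h‖ ^ 4) * γ ‖h‖
          = (M / 12) * (‖h‖ ^ 2 * (γ ‖h‖ * ‖h‖ ^ 2)) := by ring
        _ ≤ (M / 12) * (δ ^ 2 * (γ ‖h‖ * ‖h‖ ^ 2)) := by
            refine mul_le_mul_of_nonneg_left ?_ hM12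
            refine mul_le_mul_of_nonneg_right ?_
              (mul_nonneg (hγ_nonneg _) (by positivity))
            exact pow_le_pow_left₀ (norm_nonneg h) hh 2
        _ = (M / 12 * δ ^ 2) * (γ ‖h‖ * ‖h‖ ^ 2) := by ring
    · have h0 : γ ‖h‖ = 0 := hγ_supp _ (le_of_not_ge hh)
      rw [h0]; simp
  -- final assembly
  rw [h2J, ← hBint, ← integral_sub hIF hIB]
  calc |∫ h : EuclideanSpace ℝ (Fin d),
        ((u (x + h) + u (x - h) - 2 * u x) * γ ‖h‖ - B2 (fun _ => h) * γ ‖h‖)|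
      ≤ ∫ h : EuclideanSpace ℝ (Fin d),
        |(u (x + h) + u (x - h) - 2 * u x) * γ ‖h‖ - B2 (fun _ => h) * γ ‖h‖| :=
        by
          simpa [Real.norm_eq_abs] using norm_integral_le_integral_norm
            (fun h : EuclideanSpace ℝ (Fin d) =>
              (u (x + h) + u (x - h) - 2 * u x) * γ ‖h‖ - B2 (fun _ => h) * γ ‖h‖)
    _ ≤ ∫ h : EuclideanSpace ℝ (Fin d), (M / 12 * δ ^ 2) * (γ ‖h‖ * ‖h‖ ^ 2) :=
        integral_mono (hIF.sub hIB).abs (hIn.const_mul _) (fun h => hptw h)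
    _ = (M / 12 * δ ^ 2) * (d : ℝ) := by rw [integral_const_mul, hγ_norm]
    _ ≤ d * M / 12 * δ ^ 2 := le_of_eq (by ring)
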